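/- arXiv:1002.2790 — 4 statements merged into one kernel-verified Lean document; each statement's English description precedes it below -/
import Mathlib

section
/- Let (b_k) be a sequence of real numbers with ∑_{k=1}^∞ k|b_k| < ∞, and define ξ_n = -∑_{k=n+1}^∞ b_k. Then ∑_{n=1}^∞ n ξ_n² ≤ (∑_{k=1}^∞ k|b_k|)². -/
set_option maxHeartbeats 800000

/-- If `∑ k |b k| < ∞` then the tails `ξ n = -∑_{k>n} b k` satisfy
`∑ n ξ_n² ≤ (∑ k |b k|)²`. -/
theorem stmt_0 (b : ℕ → ℝ) (hb : Summable fun k : ℕ => (k : ℝ) * |b k|)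
    (ξ : ℕ → ℝ) (hξ : ∀ n, ξ n = -∑' k : ℕ, b (n + 1 + k)) :
    ∑' n : ℕ, (n : ℝ) * (ξ n) ^ 2 ≤ (∑' k : ℕ, (k : ℝ) * |b k|) ^ 2 := by
  set S : ℝ := ∑' k : ℕ, (k : ℝ) * |b k| with hS
  have hS0 : 0 ≤ S := tsum_nonneg fun k => by positivity
  -- |b| is summable
  have habs : Summable fun k : ℕ => |b k| := by
    rw [← summable_nat_add_iff 1]
    refine Summable.of_nonneg_of_le (fun k => abs_nonneg _) (fun k => ?_)
      ((summable_nat_add_iff 1).2 hb)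
    have h1 : (1 : ℝ) ≤ ((k + 1 : ℕ) : ℝ) := by exact_mod_cast Nat.one_le_iff_ne_zero.2 (by omega)
    nlinarith [abs_nonneg (b (k + 1))]
  -- tails of |b| are summable
  have htail : ∀ n : ℕ, Summable fun j : ℕ => |b (n + 1 + j)| := by
    intro n
    have := (summable_nat_add_iff (n + 1)).2 habs
    refine this.congr fun j => by rw [add_comm j (n + 1)]
  have htailb : ∀ n : ℕ, Summable fun j : ℕ => b (n + 1 + j) := by
    intro n
    exact (htail n).of_abs.congr fun j => rfl
  set T : ℕ → ℝ := fun n => ∑' j : ℕ, |b (n + 1 + j)| with hT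
  have hT0 : ∀ n, 0 ≤ T n := fun n => tsum_nonneg fun j => abs_nonneg _
  have hξT : ∀ n, |ξ n| ≤ T n := by
    intro n
    rw [hξ n, abs_neg]
    have h := norm_tsum_le_tsum_norm (f := fun k : ℕ => b (n + 1 + k))
      ((htail n).congr fun j => (Real.norm_eq_abs _).symm)
    simpa [Real.norm_eq_abs] using h
  -- the auxiliary double sum
  set F : ℕ × ℕ → ℝ := fun p => if p.2 < p.1 then |b p.1| else 0 with hF
  have hF0 : 0 ≤ F := fun p => by by_cases h : p.2 < p.1 <;> simp [hF, h, abs_nonneg]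
  have hFslice : ∀ k : ℕ, ∀ n : ℕ, n ∉ Finset.range k → F (k, n) = 0 := by
    intro k n hn
    simp only [Finset.mem_range, not_lt] at hn
    simp [hF, not_lt.2 hn]
  have hFsliceSum : ∀ k : ℕ, (∑' n : ℕ, F (k, n)) = (k : ℝ) * |b k| := by
    intro k
    rw [tsum_eq_sum (s := Finset.range k) (hFslice k)]
    have hc : ∀ n ∈ Finset.range k, F (k, n) = |b k| := fun n hn => by
      simp [hF, Finset.mem_range.mp hn]
    rw [Finset.sum_congr rfl hc, Finset.sum_const, Finset.card_range, nsmul_eq_mul, mul_comm]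
  have hFsummable : Summable F := by
    rw [summable_prod_of_nonneg hF0]
    constructor
    · intro k
      exact summable_of_ne_finset_zero (s := Finset.range k) (hFslice k)
    · exact hb.congr fun k => (hFsliceSum k).symm
  have hFtsum : (∑' p : ℕ × ℕ, F p) = S := by
    rw [Summable.tsum_prod' hFsummable (fun k => summable_of_ne_finset_zero (s := Finset.range k) (hFslice k))]
    exact tsum_congr hFsliceSum
  -- pull back along the injection σ(n,j) = (n+1+j, n)
  set σ : ℕ × ℕ → ℕ × ℕ := fun p => (p.1 + 1 + p.2, p.1) with hσdef
  have hσ : Function.Injective σ := by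
    rintro ⟨n, j⟩ ⟨n', j'⟩ h
    simp only [hσdef, Prod.mk.injEq] at h
    obtain ⟨h1, h2⟩ := h
    subst h2
    exact Prod.ext rfl (by omega)
  have hFσ : ∀ p : ℕ × ℕ, F (σ p) = |b (p.1 + 1 + p.2)| := by
    rintro ⟨n, j⟩
    simp [hF, hσdef, Nat.lt_succ_of_le (Nat.le_add_right n j), show n < n + 1 + j by omega]
  have hfsummable : Summable fun p : ℕ × ℕ => |b (p.1 + 1 + p.2)| :=
    (hFsummable.comp_injective hσ).congr hFσ
  have hrange : Function.support F ⊆ Set.range σ := by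
    rintro ⟨k, n⟩ hp
    simp only [Function.mem_support, hF] at hp
    have hn : n < k := by by_contra h; simp [h] at hp
    exact ⟨(n, k - n - 1), by simp [hσdef]; omega⟩
  have hftsum : (∑' p : ℕ × ℕ, |b (p.1 + 1 + p.2)|) = S := by
    rw [← hFtsum, ← Function.Injective.tsum_eq hσ hrange]
    exact tsum_congr fun p => (hFσ p).symm
  -- T is summable with sum S
  have hTsummable : Summable T := by
    have := ((summable_prod_of_nonneg (f := fun p : ℕ × ℕ => |b (p.1 + 1 + p.2)|)
      (fun p => abs_nonneg _)).1 hfsummable).2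
    exact this.congr fun n => rfl
  have hTtsum : (∑' n : ℕ, T n) = S := by
    rw [← hftsum, Summable.tsum_prod' hfsummable (fun n => htail n)]
  -- n * T n ≤ S
  have hnT : ∀ n : ℕ, (n : ℝ) * T n ≤ S := by
    intro n
    rw [hT, ← tsum_mul_left]
    refine Summable.tsum_le_tsum_of_inj (fun j => n + 1 + j) (fun a b h => by simp only at h; omega)
      (fun k _ => by positivity) (fun j => ?_) ((htail n).mul_left _) hb
    have h1 : (n : ℝ) ≤ ((n + 1 + j : ℕ) : ℝ) := by exact_mod_cast by omega
    exact mul_le_mul_of_nonneg_right h1 (abs_nonneg _)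
  -- termwise bound
  have hterm : ∀ n : ℕ, (n : ℝ) * (ξ n) ^ 2 ≤ S * T n := by
    intro n
    have h1 : (ξ n) ^ 2 ≤ (T n) ^ 2 := by
      rw [← sq_abs]
      exact pow_le_pow_left₀ (abs_nonneg _) (hξT n) 2
    calc (n : ℝ) * (ξ n) ^ 2 ≤ (n : ℝ) * (T n) ^ 2 :=
          mul_le_mul_of_nonneg_left h1 (Nat.cast_nonneg n)
      _ = ((n : ℝ) * T n) * T n := by ring
      _ ≤ S * T n := mul_le_mul_of_nonneg_right (hnT n) (hT0 n)
  have hlhs : Summable fun n : ℕ => (n : ℝ) * (ξ n) ^ 2 :=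
    Summable.of_nonneg_of_le (fun n => by positivity) hterm (hTsummable.mul_left S)
  calc ∑' n : ℕ, (n : ℝ) * (ξ n) ^ 2 ≤ ∑' n : ℕ, S * T n :=
        Summable.tsum_le_tsum hterm hlhs (hTsummable.mul_left S)
    _ = S * ∑' n : ℕ, T n := tsum_mul_left
    _ = S * S := by rw [hTtsum]
    _ = S ^ 2 := (sq S).symm
end

section
/- If a real sequence (b_k) satisfies ∑_{k=1}^∞ k|b_k| < ∞, then the tails ξ_n = -∑_{k>n} b_k satisfy (ξ_n) ∈ ℓ²₁, i.e., ∑_{n=1}^∞ n|ξ_n|² < ∞. -/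
open ENNReal NNReal Set

/-- If `∑ k |b k| < ∞` then the tails `ξ n = -∑_{k>n} b k` lie in `ℓ²₁`. -/
theorem stmt_1 (b : ℕ → ℝ) (hb : Summable fun k : ℕ => (k : ℝ) * |b k|)
    (ξ : ℕ → ℝ) (hξ : ∀ n, ξ n = -∑' k : ℕ, b (n + 1 + k)) :
    Summable fun n : ℕ => (n : ℝ) * |ξ n| ^ 2 := by
  classical
  -- absolute summability of b
  have habs : Summable fun k : ℕ => |b k| := by
    have h1 : Summable fun k : ℕ => ((k + 1 : ℕ) : ℝ) * |b (k + 1)| :=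
      hb.comp_injective (add_left_injective 1)
    have h2 : Summable fun k : ℕ => |b (k + 1)| := by
      apply h1.of_nonneg_of_le (fun k => abs_nonneg _)
      intro k
      have : (1 : ℝ) ≤ ((k + 1 : ℕ) : ℝ) := by
        exact_mod_cast Nat.one_le_iff_ne_zero.2 (Nat.succ_ne_zero k)
      nlinarith [abs_nonneg (b (k + 1))]
    exact (_root_.summable_nat_add_iff 1).mp h2
  set B : ℕ → ℝ≥0∞ := fun k => (‖b k‖₊ : ℝ≥0∞) with hB
  set S : ℝ≥0∞ := ∑' k : ℕ, (k : ℝ≥0∞) * B k with hS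
  -- S is finite
  have hSne : S ≠ ⊤ := by
    have hnn : Summable fun k : ℕ => (k : ℝ≥0) * ‖b k‖₊ := by
      rw [← NNReal.summable_coe]
      convert hb using 2 with k
      simp [Real.norm_eq_abs]
    have h := ENNReal.tsum_coe_ne_top_iff_summable.mpr hnn
    rw [hS]
    convert h using 2 with k
    funext k
    simp [hB]
  -- shifted summability facts
  have habs_shift : ∀ n : ℕ, Summable fun k : ℕ => |b (n + 1 + k)| := by
    intro n
    have h := (_root_.summable_nat_add_iff (n + 1)).mpr habs
    apply h.congr
    intro k
    simp [add_comm]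
  -- nnnorm of ξ dominated by tail sum
  have hξT : ∀ n : ℕ, (‖ξ n‖₊ : ℝ≥0∞) ≤ ∑' k : ℕ, B (n + 1 + k) := by
    intro n
    have hsumnn : Summable fun k : ℕ => ‖b (n + 1 + k)‖₊ := by
      rw [← NNReal.summable_coe]
      simpa [Real.norm_eq_abs] using habs_shift n
    have h1 : ‖ξ n‖₊ ≤ ∑' k : ℕ, ‖b (n + 1 + k)‖₊ := by
      rw [hξ n, nnnorm_neg]
      exact nnnorm_tsum_le hsumnn
    calc (‖ξ n‖₊ : ℝ≥0∞) ≤ ((∑' k : ℕ, ‖b (n + 1 + k)‖₊ : ℝ≥0) : ℝ≥0∞) := by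
          exact_mod_cast h1
      _ = ∑' k : ℕ, B (n + 1 + k) := ENNReal.coe_tsum hsumnn
  -- n * (tail sum) ≤ S
  have hnT : ∀ n : ℕ, (n : ℝ≥0∞) * ∑' k : ℕ, B (n + 1 + k) ≤ S := by
    intro n
    rw [← ENNReal.tsum_mul_left]
    calc ∑' k : ℕ, (n : ℝ≥0∞) * B (n + 1 + k)
        ≤ ∑' k : ℕ, ((n + 1 + k : ℕ) : ℝ≥0∞) * B (n + 1 + k) := by
          apply ENNReal.tsum_le_tsum
          intro k
          gcongr
          exact_mod_cast by omega
      _ ≤ S := by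
          rw [hS]
          exact ENNReal.summable.tsum_le_tsum_of_inj (fun k => n + 1 + k)
            (fun a c hac => by simpa using hac) (fun c _ => zero_le) (fun k => le_rfl)
            ENNReal.summable
  -- ∑ (tail sums) = S
  have hTsum : ∑' n : ℕ, ∑' k : ℕ, B (n + 1 + k) = S := by
    have hind : ∀ n : ℕ, ∑' k : ℕ, B (n + 1 + k)
        = ∑' k : ℕ, indicator {j : ℕ | n < j} B k := by
      intro n
      have hinj : Function.Injective (fun k : ℕ => n + 1 + k) :=
        fun a c hac => by simpa using hac
      have hsupp : Function.support (indicator {j : ℕ | n < j} B) ⊆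
          Set.range (fun k : ℕ => n + 1 + k) := by
        intro m hm
        have hm' : n < m := by
          by_contra h
          exact hm (indicator_of_notMem (by simpa using h) B)
        exact ⟨m - n - 1, by simp; omega⟩
      have heq := hinj.tsum_eq hsupp
      calc ∑' k : ℕ, B (n + 1 + k)
          = ∑' k : ℕ, indicator {j : ℕ | n < j} B (n + 1 + k) := by
            apply tsum_congr
            intro k
            rw [indicator_of_mem (by simp only [Set.mem_setOf_eq]; omega) B]
        _ = ∑' k : ℕ, indicator {j : ℕ | n < j} B k := heq
    calc ∑' n : ℕ, ∑' k : ℕ, B (n + 1 + k)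
        = ∑' n : ℕ, ∑' k : ℕ, indicator {j : ℕ | n < j} B k := tsum_congr hind
      _ = ∑' k : ℕ, ∑' n : ℕ, indicator {j : ℕ | n < j} B k := ENNReal.tsum_comm
      _ = ∑' k : ℕ, (k : ℝ≥0∞) * B k := by
          apply tsum_congr
          intro k
          have hz : ∀ n ∉ Finset.range k, indicator {j : ℕ | n < j} B k = 0 := by
            intro n hn
            apply indicator_of_notMem
            simp only [Finset.mem_range, not_lt] at hn
            simpa using hn
          rw [tsum_eq_sum hz]
          have hmem : ∀ n ∈ Finset.range k, indicator {j : ℕ | n < j} B k = B k := by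
            intro n hn
            exact indicator_of_mem (by simpa using Finset.mem_range.mp hn) B
          rw [Finset.sum_congr rfl hmem, Finset.sum_const, Finset.card_range, nsmul_eq_mul]
      _ = S := hS.symm
  -- main bound
  have hmain : ∑' n : ℕ, (n : ℝ≥0∞) * (‖ξ n‖₊ : ℝ≥0∞) ^ 2 ≠ ⊤ := by
    have hle : ∀ n : ℕ, (n : ℝ≥0∞) * (‖ξ n‖₊ : ℝ≥0∞) ^ 2
        ≤ S * ∑' k : ℕ, B (n + 1 + k) := by
      intro n
      calc (n : ℝ≥0∞) * (‖ξ n‖₊ : ℝ≥0∞) ^ 2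
          = ((n : ℝ≥0∞) * (‖ξ n‖₊ : ℝ≥0∞)) * (‖ξ n‖₊ : ℝ≥0∞) := by ring
        _ ≤ ((n : ℝ≥0∞) * ∑' k : ℕ, B (n + 1 + k)) * ∑' k : ℕ, B (n + 1 + k) :=
            mul_le_mul' (mul_le_mul' le_rfl (hξT n)) (hξT n)
        _ ≤ S * ∑' k : ℕ, B (n + 1 + k) := mul_le_mul' (hnT n) le_rfl
    have hcalc : ∑' n : ℕ, (n : ℝ≥0∞) * (‖ξ n‖₊ : ℝ≥0∞) ^ 2 ≤ S * S := by
      calc ∑' n : ℕ, (n : ℝ≥0∞) * (‖ξ n‖₊ : ℝ≥0∞) ^ 2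
          ≤ ∑' n : ℕ, S * ∑' k : ℕ, B (n + 1 + k) := ENNReal.tsum_le_tsum hle
        _ = S * ∑' n : ℕ, ∑' k : ℕ, B (n + 1 + k) := ENNReal.tsum_mul_left
        _ = S * S := by rw [hTsum]
    exact ne_top_of_le_ne_top (ENNReal.mul_ne_top hSne hSne) hcalc
  -- conclude
  have hg : Summable fun n : ℕ => (n : ℝ≥0) * ‖ξ n‖₊ ^ 2 := by
    apply ENNReal.tsum_coe_ne_top_iff_summable.mp
    convert hmain using 2 with n
    funext n
    simp
  have heq : (fun n : ℕ => (n : ℝ) * |ξ n| ^ 2) =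
      fun n : ℕ => (((n : ℝ≥0) * ‖ξ n‖₊ ^ 2 : ℝ≥0) : ℝ) := by
    funext n
    push_cast [coe_nnnorm, Real.norm_eq_abs]
    ring
  rw [heq]
  exact NNReal.summable_coe.mpr hg
end

section
/- Let s be a measurable function on the unit circle satisfying s(t̄) = conj(s(t)) = 1/s(t) a.e. Then |s(t)| = 1 a.e., and if s admits a representation s(t) = (-1)^γ t^j e^{-i w(t)} with w real-valued, antisymmetric (w(t̄) = -w(t)), continuous, and with w in B₂^{1/2}, then the pair (γ mod 2, j) is uniquely determined by s. -/
open MeasureTheory AddCircle Complex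

instance : Fact (0 < 2 * Real.pi) := ⟨by positivity⟩

/-- If `s` on the circle satisfies `s(t̄) = conj(s(t)) = 1/s(t)` a.e., then
`|s| = 1` a.e., and the index `(γ mod 2, j)` in any representation
`s(t) = (-1)^γ tʲ e^{-i w(t)}` (with `w` real, antisymmetric, continuous, in `B₂^{1/2}`)
is uniquely determined by `s`. -/
theorem stmt_9 (s : AddCircle (2 * Real.pi) → ℂ) (hmeas : Measurable s)
    (hsym : ∀ᵐ x ∂(haarAddCircle : Measure (AddCircle (2 * Real.pi))),
      s x ≠ 0 ∧ s (-x) = starRingEnd ℂ (s x) ∧ starRingEnd ℂ (s x) = (s x)⁻¹) :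
    (∀ᵐ x ∂(haarAddCircle : Measure (AddCircle (2 * Real.pi))), ‖s x‖ = 1) ∧
    (∀ (γ γ' : ℕ) (j j' : ℤ) (w w' : AddCircle (2 * Real.pi) → ℝ),
      Continuous w → (∀ x, w (-x) = -w x) →
      (Summable fun n : ℤ =>
        (|n| : ℝ) * ‖fourierCoeff (fun x : AddCircle (2 * Real.pi) => (w x : ℂ)) n‖ ^ 2) →
      (∀ᵐ x ∂(haarAddCircle : Measure (AddCircle (2 * Real.pi))),
        s x = (-1 : ℂ) ^ γ * fourier j x * Complex.exp (-Complex.I * (w x : ℂ))) →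
      Continuous w' → (∀ x, w' (-x) = -w' x) →
      (Summable fun n : ℤ =>
        (|n| : ℝ) * ‖fourierCoeff (fun x : AddCircle (2 * Real.pi) => (w' x : ℂ)) n‖ ^ 2) →
      (∀ᵐ x ∂(haarAddCircle : Measure (AddCircle (2 * Real.pi))),
        s x = (-1 : ℂ) ^ γ' * fourier j' x * Complex.exp (-Complex.I * (w' x : ℂ))) →
      γ % 2 = γ' % 2 ∧ j = j' ∧ w = w') := by
  constructor
  · filter_upwards [hsym] with x hx
    obtain ⟨h0, -, hc⟩ := hx
    have h1 : s x * starRingEnd ℂ (s x) = 1 := by rw [hc]; exact mul_inv_cancel₀ h0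
    rw [Complex.mul_conj] at h1
    have h2 : Complex.normSq (s x) = 1 := by exact_mod_cast h1
    rw [Complex.norm_def, h2, Real.sqrt_one]
  · intro γ γ' j j' w w' hw hws _ hrep hw' hws' _ hrep'
    have pi_ne : Real.pi ≠ 0 := Real.pi_ne_zero
    -- the two continuous representatives agree a.e., hence everywhere
    have hfc : Continuous fun x : AddCircle (2 * Real.pi) =>
        (-1 : ℂ) ^ γ * fourier j x * Complex.exp (-Complex.I * (w x : ℂ)) :=
      (continuous_const.mul (map_continuous (fourier j))).mul
        (Complex.continuous_exp.comp
          (continuous_const.mul (Complex.continuous_ofReal.comp hw)))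
    have hgc : Continuous fun x : AddCircle (2 * Real.pi) =>
        (-1 : ℂ) ^ γ' * fourier j' x * Complex.exp (-Complex.I * (w' x : ℂ)) :=
      (continuous_const.mul (map_continuous (fourier j'))).mul
        (Complex.continuous_exp.comp
          (continuous_const.mul (Complex.continuous_ofReal.comp hw')))
    have hae : (fun x : AddCircle (2 * Real.pi) =>
        (-1 : ℂ) ^ γ * fourier j x * Complex.exp (-Complex.I * (w x : ℂ)))
        =ᶠ[ae (haarAddCircle : Measure (AddCircle (2 * Real.pi)))]
        (fun x => (-1 : ℂ) ^ γ' * fourier j' x * Complex.exp (-Complex.I * (w' x : ℂ))) := by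
      filter_upwards [hrep, hrep'] with x h1 h2
      rw [← h1, ← h2]
    have heq := (Continuous.ae_eq_iff_eq haarAddCircle hfc hgc).mp hae
    -- w vanishes at 0
    have w0 : w 0 = 0 := by have := hws 0; rw [neg_zero] at this; linarith
    have w'0 : w' 0 = 0 := by have := hws' 0; rw [neg_zero] at this; linarith
    -- evaluate at 0 to get equality of signs
    have hsgn : (-1 : ℂ) ^ γ = (-1 : ℂ) ^ γ' := by
      have h0 := congrFun heq 0
      simpa [fourier_eval_zero, w0, w'0] using h0
    -- parity of γ
    have hpar : γ % 2 = γ' % 2 := by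
      rcases Nat.even_or_odd γ with he | ho <;> rcases Nat.even_or_odd γ' with he' | ho'
      · rw [Nat.even_iff.mp he, Nat.even_iff.mp he']
      · exfalso
        rw [he.neg_one_pow, ho'.neg_one_pow] at hsgn
        norm_num at hsgn
      · exfalso
        rw [ho.neg_one_pow, he'.neg_one_pow] at hsgn
        norm_num at hsgn
      · rw [Nat.odd_iff.mp ho, Nat.odd_iff.mp ho']
    -- cancel the sign factor
    have hpt : ∀ x : AddCircle (2 * Real.pi),
        fourier j x * Complex.exp (-Complex.I * (w x : ℂ)) =
        fourier j' x * Complex.exp (-Complex.I * (w' x : ℂ)) := by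
      intro x
      have h := congrFun heq x
      rw [hsgn] at h
      have hne : ((-1 : ℂ) ^ γ') ≠ 0 := pow_ne_zero _ (by norm_num)
      rw [mul_assoc, mul_assoc] at h
      exact mul_left_cancel₀ hne h
    -- fourier on the circle of circumference 2π
    have hfour : ∀ (n : ℤ) (θ : ℝ),
        fourier n (θ : AddCircle (2 * Real.pi)) = Complex.exp (Complex.I * (n * θ : ℝ)) := by
      intro n θ
      rw [fourier_coe_apply]
      congr 1
      push_cast
      have h2 : ((2 : ℂ) * Real.pi) ≠ 0 := by
        simp [Real.pi_ne_zero]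
      field_simp
    -- key: the phase difference is a multiple of 2π, for each real θ
    have key : ∀ θ : ℝ, ∃ n : ℤ,
        ((j : ℝ) - j') * θ - (w θ - w' θ) = 2 * Real.pi * n := by
      intro θ
      have h := hpt (θ : AddCircle (2 * Real.pi))
      rw [hfour j θ, hfour j' θ, ← Complex.exp_add, ← Complex.exp_add] at h
      obtain ⟨n, hn⟩ := Complex.exp_eq_exp_iff_exists_int.mp h
      refine ⟨n, ?_⟩
      have h2 : Complex.I * ((((j : ℝ) - j') * θ - (w θ - w' θ)) : ℝ) =
          Complex.I * ((2 * Real.pi * n : ℝ) : ℂ) := by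
        push_cast
        push_cast at hn
        linear_combination hn
      have h3 := mul_left_cancel₀ Complex.I_ne_zero h2
      exact_mod_cast h3
    -- the continuous phase difference takes values in 2πℤ and vanishes at 0, hence ≡ 0
    have hD : Continuous fun θ : ℝ => ((j : ℝ) - j') * θ - (w θ - w' θ) :=
      (continuous_const.mul continuous_id).sub
        ((hw.comp continuous_quotient_mk').sub (hw'.comp continuous_quotient_mk'))
    have hS : {θ : ℝ | ((j : ℝ) - j') * θ - (w θ - w' θ) = 0} = Set.univ := by
      have hopen : {θ : ℝ | ((j : ℝ) - j') * θ - (w θ - w' θ) = 0} =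
          (fun θ : ℝ => ((j : ℝ) - j') * θ - (w θ - w' θ)) ⁻¹'
            (Metric.ball 0 (2 * Real.pi)) := by
        ext θ
        simp only [Set.mem_setOf_eq, Set.mem_preimage, Metric.mem_ball,
          Real.dist_eq, sub_zero]
        constructor
        · intro h; rw [h]; simpa using Real.two_pi_pos
        · intro h
          obtain ⟨n, hn⟩ := key θ
          rw [hn] at h ⊢
          have habs : |(n : ℝ)| < 1 := by
            rw [abs_mul, abs_of_pos Real.two_pi_pos] at h
            nlinarith [Real.two_pi_pos]
          have hn0 : n = 0 := by
            have h1 : |n| < 1 := by exact_mod_cast habs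
            rcases abs_lt.mp h1 with ⟨h2, h3⟩
            omega
          rw [hn0]
          simp
      refine IsClopen.eq_univ ⟨?_, ?_⟩ ?_
      · exact isClosed_eq hD continuous_const
      · rw [hopen]
        exact IsOpen.preimage hD Metric.isOpen_ball
      · refine ⟨0, ?_⟩
        have hc0 : ((0 : ℝ) : AddCircle (2 * Real.pi)) = 0 := by push_cast; rfl
        simp [Set.mem_setOf_eq, hc0, w0, w'0]
    have Dzero : ∀ θ : ℝ, ((j : ℝ) - j') * θ - (w θ - w' θ) = 0 := fun θ =>
      Set.eq_univ_iff_forall.mp hS θ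
    -- evaluate at θ = 2π to get j = j'
    have hjj : j = j' := by
      have h := Dzero (2 * Real.pi)
      rw [show ((2 * Real.pi : ℝ) : AddCircle (2 * Real.pi)) = 0 from coe_period _,
        w0, w'0] at h
      have h2 : (j : ℝ) - j' = 0 := by
        rcases mul_eq_zero.mp (by linarith : ((j : ℝ) - j') * (2 * Real.pi) = 0) with h3 | h3
        · exact h3
        · exact absurd h3 (by positivity)
      have : (j : ℝ) = j' := by linarith
      exact_mod_cast this
    refine ⟨hpar, hjj, ?_⟩
    funext x
    refine QuotientAddGroup.induction_on x fun θ => ?_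
    have h := Dzero θ
    rw [hjj] at h
    simp only [sub_self, zero_mul, zero_sub, neg_eq_zero, sub_eq_zero] at h
    exact h
end

section
/- For 0 ≤ a < 1, the probability measure dμ = c·|1 - at|² dm(t) on the unit circle (c the appropriate normalizing constant) has Verblunsky coefficients α_n = -(a^{-1} - a)/(a^{-n-2} - a^{n+2}) for n = 0,1,2,…, when 0 < a < 1; in particular α_n → 0 exponentially fast. -/
open MeasureTheory AddCircle Complex
open scoped NNReal ENNReal

lemma int_fourier (n : ℤ) :
    ∫ x : AddCircle (2 * Real.pi), fourier n x ∂haarAddCircle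
      = if n = 0 then 1 else 0 := by
  split_ifs with h
  · subst h
    have : (fun x : AddCircle (2 * Real.pi) => (fourier 0 x : ℂ)) = fun _ => 1 := by
      ext1 x; exact fourier_zero
    rw [this, integral_const, probReal_univ]
    simp
  · exact integral_eq_zero_of_add_right_eq_neg
      (fourier_add_half_inv_index h (by positivity) )

lemma fourier_cont (n : ℤ) : Continuous fun x : AddCircle (2 * Real.pi) => (fourier n x : ℂ) :=
  (fourier n).continuous

lemma fourier_integrable (n : ℤ) :
    Integrable (fun x : AddCircle (2 * Real.pi) => (fourier n x : ℂ)) haarAddCircle :=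
  (fourier_cont n).integrable_of_hasCompactSupport (HasCompactSupport.of_compactSpace _)

lemma int_mu (a c : ℝ) (hc : 0 ≤ c) (F : AddCircle (2 * Real.pi) → ℂ) :
    ∫ x, F x ∂((haarAddCircle : Measure (AddCircle (2 * Real.pi))).withDensity
      (fun x => ENNReal.ofReal (c * ‖1 - (a : ℂ) * fourier 1 x‖ ^ 2)))
    = ∫ x, ((c * ‖1 - (a : ℂ) * fourier 1 x‖ ^ 2 : ℝ) : ℂ) * F x ∂haarAddCircle := by
  set D : AddCircle (2 * Real.pi) → ℝ := fun x => c * ‖1 - (a : ℂ) * fourier 1 x‖ ^ 2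
    with hD
  have hDnn : ∀ x, 0 ≤ D x := fun x => mul_nonneg hc (by positivity)
  have hDc : Continuous D := by
    apply Continuous.mul continuous_const
    exact (continuous_norm.comp (continuous_const.sub (continuous_const.mul (fourier_cont 1)))).pow 2
  have hmeas : Measurable fun x => (D x).toNNReal :=
    (continuous_real_toNNReal.comp hDc).measurable
  have : ∫ x, F x ∂((haarAddCircle : Measure (AddCircle (2 * Real.pi))).withDensity
      (fun x => ((((D x).toNNReal : ℝ≥0)) : ENNReal)))
      = ∫ x, ((D x).toNNReal : ℝ≥0) • F x ∂haarAddCircle :=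
    integral_withDensity_eq_integral_smul hmeas F
  rw [show (fun x => ENNReal.ofReal (c * ‖1 - (a : ℂ) * fourier 1 x‖ ^ 2))
      = fun x => ((((D x).toNNReal : ℝ≥0)) : ENNReal) from rfl]
  rw [this]
  congr 1
  ext x
  rw [NNReal.smul_def, Real.coe_toNNReal _ (hDnn x), Complex.real_smul]

lemma density_eval (a c : ℝ) (n : ℤ) (x : AddCircle (2 * Real.pi)) :
    ((c * ‖1 - (a : ℂ) * fourier 1 x‖ ^ 2 : ℝ) : ℂ) * fourier n x
    = (c : ℂ) * (1 + (a : ℂ) ^ 2) * fourier n x - (c : ℂ) * a * fourier (n + 1) x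
      - (c : ℂ) * a * fourier (n - 1) x := by
  have h1 : ((‖1 - (a : ℂ) * fourier 1 x‖ ^ 2 : ℝ) : ℂ)
      = (1 - (a : ℂ) * fourier 1 x) * (1 - (a : ℂ) * fourier (-1) x) := by
    rw [Complex.sq_norm, ← Complex.mul_conj]
    congr 1
    rw [map_sub, map_one, map_mul, Complex.conj_ofReal, ← fourier_neg]
  have hmul : (fourier 1 x : ℂ) * fourier (-1 : ℤ) x = 1 := by
    rw [← fourier_add]; norm_num
  have h2 : (fourier (n + 1) x : ℂ) = fourier n x * fourier 1 x := fourier_add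
  have h3 : (fourier (n - 1) x : ℂ) = fourier n x * fourier (-1 : ℤ) x := by
    rw [sub_eq_add_neg]; exact fourier_add
  rw [Complex.ofReal_mul, h1, h2, h3]
  linear_combination (c : ℂ) * (a : ℂ) ^ 2 * fourier n x * hmul

lemma moment (a c : ℝ) (hc : 0 ≤ c) (n : ℤ) :
    ∫ x, fourier n x ∂((haarAddCircle : Measure (AddCircle (2 * Real.pi))).withDensity
      (fun x => ENNReal.ofReal (c * ‖1 - (a : ℂ) * fourier 1 x‖ ^ 2)))
    = (c : ℂ) * (1 + (a : ℂ) ^ 2) * (if n = 0 then 1 else 0)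
      - (c : ℂ) * a * (if n + 1 = 0 then 1 else 0)
      - (c : ℂ) * a * (if n - 1 = 0 then 1 else 0) := by
  rw [int_mu a c hc]
  have : (fun x : AddCircle (2 * Real.pi) =>
      ((c * ‖1 - (a : ℂ) * fourier 1 x‖ ^ 2 : ℝ) : ℂ) * fourier n x)
      = fun x => (c : ℂ) * (1 + (a : ℂ) ^ 2) * fourier n x - (c : ℂ) * a * fourier (n + 1) x
      - (c : ℂ) * a * fourier (n - 1) x := funext fun x => density_eval a c n x
  have hI1 : Integrable (fun x : AddCircle (2 * Real.pi) =>
      (c : ℂ) * (1 + (a : ℂ) ^ 2) * fourier n x) haarAddCircle :=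
    (fourier_integrable n).const_mul _
  have hI2 : Integrable (fun x : AddCircle (2 * Real.pi) =>
      (c : ℂ) * a * fourier (n + 1) x) haarAddCircle :=
    (fourier_integrable (n + 1)).const_mul _
  have hI3 : Integrable (fun x : AddCircle (2 * Real.pi) =>
      (c : ℂ) * a * fourier (n - 1) x) haarAddCircle :=
    (fourier_integrable (n - 1)).const_mul _
  have hI12 : Integrable (fun x : AddCircle (2 * Real.pi) =>
      (c : ℂ) * (1 + (a : ℂ) ^ 2) * fourier n x - (c : ℂ) * a * fourier (n + 1) x)
      haarAddCircle := hI1.sub hI2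
  rw [this, integral_sub hI12 hI3, integral_sub hI1 hI2,
    MeasureTheory.integral_const_mul, MeasureTheory.integral_const_mul,
    MeasureTheory.integral_const_mul, int_fourier, int_fourier, int_fourier]

lemma fourier_pow (m : ℤ) (k : ℕ) (x : AddCircle (2 * Real.pi)) :
    (fourier m x : ℂ) ^ k = fourier ((k : ℤ) * m) x := by
  induction k with
  | zero => simp [fourier_zero]
  | succ k ih =>
      rw [pow_succ, ih, ← fourier_add]
      congr 1
      push_cast
      ring

lemma int_poly (a c : ℝ) (hc : 0 ≤ c) (μ : Measure (AddCircle (2 * Real.pi)))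
    (hμ : μ = (haarAddCircle : Measure (AddCircle (2 * Real.pi))).withDensity
      (fun x => ENNReal.ofReal (c * ‖1 - (a : ℂ) * fourier 1 x‖ ^ 2)))
    (hprob : IsProbabilityMeasure μ)
    (P : Polynomial ℂ) (j : ℕ) (hj : j < P.natDegree) :
    ∫ x, P.eval (fourier 1 x) * (starRingEnd ℂ (fourier 1 x)) ^ j ∂μ
      = (c : ℂ) * (1 + (a : ℂ) ^ 2) * P.coeff j - (c : ℂ) * a * P.coeff (j + 1)
        - (c : ℂ) * a * (if j = 0 then 0 else P.coeff (j - 1)) := by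
  set d := P.natDegree with hd
  have hpt : ∀ x : AddCircle (2 * Real.pi),
      P.eval (fourier 1 x) * (starRingEnd ℂ (fourier 1 x)) ^ j
      = ∑ k ∈ Finset.range (d + 1), P.coeff k * fourier ((k : ℤ) - j) x := by
    intro x
    rw [Polynomial.eval_eq_sum_range, Finset.sum_mul]
    refine Finset.sum_congr rfl fun k _ => ?_
    rw [← fourier_neg (n := 1), fourier_pow, fourier_pow, mul_assoc, ← fourier_add]
    congr 2
    push_cast
    ring
  have hint : ∀ k : ℕ, Integrable
      (fun x : AddCircle (2 * Real.pi) => P.coeff k * fourier ((k : ℤ) - j) x) μ :=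
    fun k => (((fourier ((k : ℤ) - j)).continuous.integrable_of_hasCompactSupport
      (HasCompactSupport.of_compactSpace _)).const_mul _)
  calc ∫ x, P.eval (fourier 1 x) * (starRingEnd ℂ (fourier 1 x)) ^ j ∂μ
      = ∫ x, ∑ k ∈ Finset.range (d + 1), P.coeff k * fourier ((k : ℤ) - j) x ∂μ := by
        exact integral_congr_ae (Filter.Eventually.of_forall hpt)
    _ = ∑ k ∈ Finset.range (d + 1), ∫ x, P.coeff k * fourier ((k : ℤ) - j) x ∂μ :=
        integral_finset_sum _ fun k _ => hint k
    _ = ∑ k ∈ Finset.range (d + 1), P.coeff k *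
          ((c : ℂ) * (1 + (a : ℂ) ^ 2) * (if (k : ℤ) - j = 0 then 1 else 0)
            - (c : ℂ) * a * (if (k : ℤ) - j + 1 = 0 then 1 else 0)
            - (c : ℂ) * a * (if (k : ℤ) - j - 1 = 0 then 1 else 0)) := by
        refine Finset.sum_congr rfl fun k _ => ?_
        rw [MeasureTheory.integral_const_mul, hμ, moment a c hc]
    _ = (c : ℂ) * (1 + (a : ℂ) ^ 2) * P.coeff j - (c : ℂ) * a * P.coeff (j + 1)
        - (c : ℂ) * a * (if j = 0 then 0 else P.coeff (j - 1)) := by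
        rcases j with _ | j'
        · have key : ∀ k ∈ Finset.range (d + 1), P.coeff k *
              ((c : ℂ) * (1 + (a : ℂ) ^ 2) * (if (k : ℤ) - (0 : ℕ) = 0 then 1 else 0)
                - (c : ℂ) * a * (if (k : ℤ) - (0 : ℕ) + 1 = 0 then 1 else 0)
                - (c : ℂ) * a * (if (k : ℤ) - (0 : ℕ) - 1 = 0 then 1 else 0))
              = (if (0 : ℕ) = k then (c : ℂ) * (1 + (a : ℂ) ^ 2) * P.coeff k else 0)
                - (if (1 : ℕ) = k then (c : ℂ) * a * P.coeff k else 0) := by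
            intro k _
            have h1 : ((k : ℤ) - (0 : ℕ) = 0) ↔ ((0 : ℕ) = k) := by omega
            have h2 : ¬ ((k : ℤ) - (0 : ℕ) + 1 = 0) := by omega
            have h3 : ((k : ℤ) - (0 : ℕ) - 1 = 0) ↔ ((1 : ℕ) = k) := by omega
            rw [if_congr h1 rfl rfl, if_neg h2, if_congr h3 rfl rfl]
            split_ifs <;> ring
          rw [Finset.sum_congr rfl key, Finset.sum_sub_distrib, Finset.sum_ite_eq,
            Finset.sum_ite_eq, if_pos (Finset.mem_range.mpr (by omega)),
            if_pos (Finset.mem_range.mpr (by omega))]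
          simp
        · have key : ∀ k ∈ Finset.range (d + 1), P.coeff k *
              ((c : ℂ) * (1 + (a : ℂ) ^ 2) * (if (k : ℤ) - (j' + 1 : ℕ) = 0 then 1 else 0)
                - (c : ℂ) * a * (if (k : ℤ) - (j' + 1 : ℕ) + 1 = 0 then 1 else 0)
                - (c : ℂ) * a * (if (k : ℤ) - (j' + 1 : ℕ) - 1 = 0 then 1 else 0))
              = ((if (j' + 1 : ℕ) = k then (c : ℂ) * (1 + (a : ℂ) ^ 2) * P.coeff k else 0)
                - (if j' = k then (c : ℂ) * a * P.coeff k else 0))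
                - (if (j' + 2 : ℕ) = k then (c : ℂ) * a * P.coeff k else 0) := by
            intro k _
            have h1 : ((k : ℤ) - (j' + 1 : ℕ) = 0) ↔ ((j' + 1 : ℕ) = k) := by
              push_cast; omega
            have h2 : ((k : ℤ) - (j' + 1 : ℕ) + 1 = 0) ↔ (j' = k) := by
              push_cast; omega
            have h3 : ((k : ℤ) - (j' + 1 : ℕ) - 1 = 0) ↔ ((j' + 2 : ℕ) = k) := by
              push_cast; omega
            rw [if_congr h1 rfl rfl, if_congr h2 rfl rfl, if_congr h3 rfl rfl]
            split_ifs <;> first | ring | omega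
          rw [Finset.sum_congr rfl key, Finset.sum_sub_distrib, Finset.sum_sub_distrib,
            Finset.sum_ite_eq, Finset.sum_ite_eq, Finset.sum_ite_eq,
            if_pos (Finset.mem_range.mpr (by omega)),
            if_pos (Finset.mem_range.mpr (by omega)),
            if_pos (Finset.mem_range.mpr (by omega))]
          simp only [Nat.succ_ne_zero, if_false, Nat.add_sub_cancel,
            show j' + 1 + 1 = j' + 2 from rfl]
          ring

lemma Grec (a : ℂ) (ha : a ≠ 0) (j : ℕ) :
    (1 + a ^ 2) * (a ^ (j + 3) - a⁻¹ ^ (j + 1)) - a * (a ^ (j + 2) - a⁻¹ ^ j)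
      = a * (a ^ (j + 4) - a⁻¹ ^ (j + 2)) := by
  have hinv : a * a⁻¹ = 1 := mul_inv_cancel₀ ha
  linear_combination (a⁻¹ ^ (j + 1) - a * a⁻¹ ^ j) * hinv

lemma coeff_solution (a : ℂ) (ha : a ≠ 0) (p : ℕ → ℂ) (n : ℕ)
    (hrec : ∀ j ≤ n, (1 + a ^ 2) * p j
      = a * p (j + 1) + a * (if j = 0 then 0 else p (j - 1))) :
    ∀ j ≤ n + 1, (a ^ 2 - 1) * p j = p 0 * (a ^ (j + 2) - a⁻¹ ^ j) := by
  intro j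
  induction j using Nat.strong_induction_on with
  | _ j ih =>
    intro hjle
    match j with
    | 0 => simp; ring
    | 1 =>
        have h0 := hrec 0 (by omega)
        norm_num at h0
        have hinv : a * a⁻¹ = 1 := mul_inv_cancel₀ ha
        apply mul_left_cancel₀ ha
        calc a * ((a ^ 2 - 1) * p 1) = (a ^ 2 - 1) * (a * p 1) := by ring
          _ = (a ^ 2 - 1) * ((1 + a ^ 2) * p 0) := by rw [← h0]
          _ = a * (p 0 * (a ^ (1 + 2) - a⁻¹ ^ 1)) := by
              have : a⁻¹ = a⁻¹ := rfl
              field_simp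
              ring
    | (j' + 2) =>
        have h1 := ih (j' + 1) (by omega) (by omega)
        have h2 := ih j' (by omega) (by omega)
        have h0 := hrec (j' + 1) (by omega)
        norm_num at h0
        apply mul_left_cancel₀ ha
        calc a * ((a ^ 2 - 1) * p (j' + 2))
            = (a ^ 2 - 1) * (a * p (j' + 2) + a * p j') - a * ((a ^ 2 - 1) * p j') := by
              ring
          _ = (a ^ 2 - 1) * ((1 + a ^ 2) * p (j' + 1)) - a * ((a ^ 2 - 1) * p j') := by
              rw [← h0]
          _ = (1 + a ^ 2) * ((a ^ 2 - 1) * p (j' + 1)) - a * ((a ^ 2 - 1) * p j') := by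
              ring
          _ = (1 + a ^ 2) * (p 0 * (a ^ (j' + 1 + 2) - a⁻¹ ^ (j' + 1)))
              - a * (p 0 * (a ^ (j' + 2) - a⁻¹ ^ j')) := by rw [h1, h2]
          _ = p 0 * ((1 + a ^ 2) * (a ^ (j' + 3) - a⁻¹ ^ (j' + 1))
              - a * (a ^ (j' + 2) - a⁻¹ ^ j')) := by ring_nf
          _ = p 0 * (a * (a ^ (j' + 4) - a⁻¹ ^ (j' + 2))) := by rw [Grec a ha j']
          _ = a * (p 0 * (a ^ (j' + 2 + 2) - a⁻¹ ^ (j' + 2))) := by ring_nf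

lemma denom_neg (a : ℝ) (ha : 0 < a) (ha1 : a < 1) (n : ℕ) :
    a ^ (n + 3) - a⁻¹ ^ (n + 1) < 0 := by
  have h1 : a ^ (n + 3) < 1 := pow_lt_one₀ ha.le ha1 (by omega)
  have h2 : (1 : ℝ) ≤ a⁻¹ := (one_le_inv₀ ha).mpr ha1.le
  have h3 : (1 : ℝ) ≤ a⁻¹ ^ (n + 1) := one_le_pow₀ h2
  linarith

lemma zpow_form (a : ℝ) (ha : 0 < a) (ha1 : a < 1) (n : ℕ) :
    -(a⁻¹ - a) / (a ^ (-(n : ℤ) - 2) - a ^ ((n : ℤ) + 2))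
      = -((a ^ 2 - 1) / (a ^ (n + 3) - a⁻¹ ^ (n + 1))) := by
  have ha0 : a ≠ 0 := ha.ne'
  have h1 : a ^ (-(n : ℤ) - 2) = a⁻¹ ^ (n + 2) := by
    rw [show (-(n : ℤ) - 2) = -((n : ℤ) + 2) by ring, zpow_neg,
      show ((n : ℤ) + 2) = ((n + 2 : ℕ) : ℤ) by push_cast; ring, zpow_natCast, ← inv_pow]
  have h2 : a ^ ((n : ℤ) + 2) = a ^ (n + 2) := by norm_cast
  rw [h1, h2]
  have hd1 : a⁻¹ ^ (n + 2) - a ^ (n + 2) ≠ 0 := by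
    have := denom_neg a ha ha1 (n + 1)
    have e : a ^ (n + 1 + 3) - a⁻¹ ^ (n + 1 + 1) < 0 := this
    nlinarith [pow_pos ha (n+2), pow_pos (inv_pos.mpr ha) (n+2),
      pow_lt_one₀ ha.le ha1 (show n + 2 ≠ 0 by omega), one_le_pow₀ ((one_le_inv₀ ha).mpr ha1.le) (n := n+2)]
  have hd2 : a ^ (n + 3) - a⁻¹ ^ (n + 1) ≠ 0 := (denom_neg a ha ha1 n).ne
  rw [neg_div, neg_inj, div_eq_div_iff hd1 hd2]
  have hinv : a * a⁻¹ = 1 := mul_inv_cancel₀ ha0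
  field_simp
  linear_combination (a⁻¹ * a⁻¹ ^ n - a * a⁻¹ * a * a⁻¹ ^ n) * hinv

lemma bound_lem (a : ℝ) (ha : 0 < a) (ha1 : a < 1) (n : ℕ) :
    |(-((a ^ 2 - 1) / (a ^ (n + 3) - a⁻¹ ^ (n + 1))))| ≤ a * a ^ n := by
  have hd := denom_neg a ha ha1 n
  have ha0 : a ≠ 0 := ha.ne'
  have habs : |(-((a ^ 2 - 1) / (a ^ (n + 3) - a⁻¹ ^ (n + 1))))|
      = (1 - a ^ 2) / (a⁻¹ ^ (n + 1) - a ^ (n + 3)) := by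
    rw [abs_neg, abs_div, abs_of_nonpos (by nlinarith : a ^ 2 - 1 ≤ 0),
      abs_of_neg hd]
    ring_nf
  rw [habs, div_le_iff₀ (by linarith)]
  have hinv : a ^ (n + 1) * a⁻¹ ^ (n + 1) = 1 := by
    rw [← mul_pow, mul_inv_cancel₀ ha0, one_pow]
  have hkey : a * a ^ n * (a⁻¹ ^ (n + 1) - a ^ (n + 3)) = 1 - a ^ (2 * n + 4) := by
    have e1 : a * a ^ n = a ^ (n + 1) := by ring
    rw [e1, mul_sub, hinv, ← pow_add]
    ring_nf
  rw [hkey]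
  have : a ^ (2 * n + 4) ≤ a ^ 2 := pow_le_pow_of_le_one ha.le ha1.le (by omega)
  linarith


/-- For `0 < a < 1`, the probability measure `dμ = c·|1-at|² dm(t)` on the
circle (with normalizing constant `c`) has Verblunsky coefficients
`αₙ = -(a⁻¹ - a)/(a^{-n-2} - a^{n+2})`; in particular `αₙ → 0` exponentially fast. -/
theorem stmt_14 (a : ℝ) (ha : 0 < a) (ha1 : a < 1) (c : ℝ) (hc : 0 < c)
    (μ : Measure (AddCircle (2 * Real.pi)))
    (hμ : μ = (haarAddCircle : Measure (AddCircle (2 * Real.pi))).withDensity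
      (fun x => ENNReal.ofReal (c * ‖1 - (a : ℂ) * fourier 1 x‖ ^ 2)))
    (hprob : IsProbabilityMeasure μ)
    (Φ : ℕ → Polynomial ℂ)
    (hmonic : ∀ n, (Φ n).Monic ∧ (Φ n).natDegree = n)
    (horth : ∀ n, ∀ j < n,
      ∫ x, (Φ n).eval (fourier 1 x) * (starRingEnd ℂ (fourier 1 x)) ^ j ∂μ = 0)
    (α : ℕ → ℂ) (hα : ∀ n, α n = -starRingEnd ℂ ((Φ (n + 1)).eval 0)) :
    (∀ n : ℕ, α n = (↑(-(a⁻¹ - a) / (a ^ (-(n : ℤ) - 2) - a ^ ((n : ℤ) + 2))) : ℂ)) ∧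
      ∃ C : ℝ, 0 < C ∧ ∀ n : ℕ, ‖α n‖ ≤ C * a ^ n := by
  have ha0 : (a : ℂ) ≠ 0 := by exact_mod_cast ha.ne'
  have hc' : (c : ℂ) ≠ 0 := by exact_mod_cast hc.ne'
  have hform : ∀ n : ℕ, α n = ((-((a ^ 2 - 1) / (a ^ (n + 3) - a⁻¹ ^ (n + 1))) : ℝ) : ℂ) := by
    intro n
    have hdeg : (Φ (n + 1)).natDegree = n + 1 := (hmonic (n + 1)).2
    have hlead : (Φ (n + 1)).coeff (n + 1) = 1 := by
      have h := (hmonic (n + 1)).1.coeff_natDegree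
      rwa [hdeg] at h
    have hrec : ∀ j ≤ n, (1 + (a : ℂ) ^ 2) * (Φ (n + 1)).coeff j
        = (a : ℂ) * (Φ (n + 1)).coeff (j + 1)
          + (a : ℂ) * (if j = 0 then 0 else (Φ (n + 1)).coeff (j - 1)) := by
      intro j hj
      have h0 := horth (n + 1) j (by omega)
      rw [int_poly a c hc.le μ hμ hprob (Φ (n + 1)) j (by omega)] at h0
      apply mul_left_cancel₀ hc'
      linear_combination h0
    have hsol := coeff_solution (a : ℂ) ha0 (fun k => (Φ (n + 1)).coeff k) n hrec
      (n + 1) le_rfl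
    simp only [hlead, mul_one] at hsol
    -- hsol : (a^2 - 1) = coeff 0 * ((a:ℂ)^(n+1+2) - (a:ℂ)⁻¹^(n+1))
    set D : ℝ := a ^ (n + 3) - a⁻¹ ^ (n + 1) with hD
    have hDne : D ≠ 0 := (denom_neg a ha ha1 n).ne
    have hDcast : ((a : ℂ) ^ (n + 1 + 2) - (a : ℂ)⁻¹ ^ (n + 1)) = (D : ℂ) := by
      rw [hD]
      push_cast
      norm_num
    rw [hDcast] at hsol
    have hDneC : (D : ℂ) ≠ 0 := by exact_mod_cast hDne
    have hp0 : (Φ (n + 1)).coeff 0 = (((a ^ 2 - 1) / D : ℝ) : ℂ) := by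
      push_cast
      field_simp
      linear_combination -hsol
    rw [hα n, ← Polynomial.coeff_zero_eq_eval_zero, hp0, Complex.conj_ofReal,
      ← Complex.ofReal_neg]
  constructor
  · intro n
    rw [hform n, zpow_form a ha ha1 n]
  · refine ⟨a, ha, fun n => ?_⟩
    rw [hform n, Complex.norm_real, Real.norm_eq_abs]
    exact bound_lem a ha ha1 n
end
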